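/- Orthogonality of Hermite polynomials with respect to the standard Gaussian measure: for all natural numbers m and n, ∫ Hₘ(x) · Hₙ(x) d(gaussianReal 0 1)(x) = m! if m = n, and = 0 if m ≠ n. (This expresses that the eigenspaces of the Ornstein–Uhlenbeck operator corresponding to distinct eigenvalues, spanned by the Hermite polynomials, are mutually orthogonal in L² of the Gaussian measure, with ‖Hₙ‖²_{L²} = n!.) -/

import Mathlib

open MeasureTheory ProbabilityTheory Polynomial

namespace HermiteOrthAux

noncomputable def g (x : ℝ) : ℝ := Real.exp (-(x ^ 2 / 2))

lemma hermite_derivative (n : ℕ) :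
    derivative (hermite (n + 1)) = C (n + 1 : ℤ) * hermite n := by
  induction n with
  | zero => simp [hermite_one, hermite_zero]
  | succ n ih =>
    rw [hermite_succ (n + 1), derivative_sub, derivative_mul, derivative_X, one_mul, ih,
      derivative_mul, derivative_C, zero_mul, zero_add, hermite_succ n]
    push_cast
    simp only [C_add, C_1]
    ring

lemma hasDerivAt_hermite_gaussian (n : ℕ) (x : ℝ) :
    HasDerivAt (fun y : ℝ => aeval y (hermite n) * g y)
      (-(aeval x (hermite (n + 1)) * g x)) x := by
  have h1 : HasDerivAt (fun y : ℝ => aeval y (hermite n))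
      (aeval x (derivative (hermite n))) x := (hermite n).hasDerivAt_aeval x
  have h2 : HasDerivAt g (-x * g x) x := by
    have hx : HasDerivAt (fun y : ℝ => -(y ^ 2 / 2)) (-x) x := by
      simpa using ((hasDerivAt_pow 2 x).div_const 2).fun_neg
    show HasDerivAt (fun y => g y) (-x * g x) x
    simpa [g, mul_comm] using hx.exp
  have h := h1.mul h2
  convert h using 1
  · rfl
  · rfl
  · rfl
  have hs : aeval x (hermite (n + 1)) =
      x * aeval x (hermite n) - aeval x (derivative (hermite n)) := by
    rw [hermite_succ]; simp
  rw [hs]; ring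

lemma integrable_aeval_mul_gaussian (p : Polynomial ℤ) :
    Integrable (fun x : ℝ => aeval x p * g x) := by
  induction p using Polynomial.induction_on' with
  | add p q hp hq => simpa [add_mul] using hp.fun_add hq
  | monomial k c =>
    have hk : Integrable (fun x : ℝ => x ^ k * g x) := by
      have h := integrable_rpow_mul_exp_neg_mul_sq (show (0:ℝ) < 1/2 by norm_num)
        (s := (k : ℝ)) (neg_one_lt_zero.trans_le (Nat.cast_nonneg k))
      have he : (fun x : ℝ => x ^ (k : ℝ) * Real.exp (-(1/2 : ℝ) * x ^ 2))
          = fun x : ℝ => x ^ k * g x := by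
        funext x
        rw [Real.rpow_natCast]
        congr 1
        unfold g
        congr 1
        ring
      rwa [he] at h
    have := hk.const_mul (c : ℝ)
    refine this.congr (Filter.Eventually.of_forall fun x => ?_)
    simp [aeval_monomial]
    ring

lemma integrable_J (m n : ℕ) :
    Integrable (fun x : ℝ => aeval x (hermite m) * aeval x (hermite n) * g x) := by
  have := integrable_aeval_mul_gaussian (hermite m * hermite n)
  simpa [map_mul] using this

lemma base (n : ℕ) : ∫ x : ℝ, aeval x (hermite (n + 1)) * g x = 0 := by
  have hu : ∀ x : ℝ, HasDerivAt (fun _ : ℝ => (1 : ℝ)) ((fun _ : ℝ => (0:ℝ)) x) x :=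
    fun x => hasDerivAt_const x 1
  have hv := hasDerivAt_hermite_gaussian n
  have I1 : Integrable ((fun _ : ℝ => (1:ℝ)) *
      (fun x : ℝ => -(aeval x (hermite (n + 1)) * g x))) := by
    refine ((integrable_aeval_mul_gaussian (hermite (n+1))).neg).congr
      (Filter.Eventually.of_forall fun x => ?_)
    simp
  have I2 : Integrable ((fun _ : ℝ => (0:ℝ)) *
      (fun x : ℝ => aeval x (hermite n) * g x)) := by
    simpa using (integrable_zero ℝ ℝ (volume : Measure ℝ)).congr
      (Filter.Eventually.of_forall fun x : ℝ => by simp [Pi.mul_apply] : _)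
  have I3 : Integrable ((fun _ : ℝ => (1:ℝ)) *
      (fun x : ℝ => aeval x (hermite n) * g x)) := by
    refine (integrable_aeval_mul_gaussian (hermite n)).congr
      (Filter.Eventually.of_forall fun x => ?_)
    simp
  have key := integral_mul_deriv_eq_deriv_mul_of_integrable (fun x _ => hu x) (fun x _ => hv x) I1 I2 I3
  simp only [one_mul, zero_mul, integral_zero, neg_zero, integral_neg] at key
  linarith [key]

lemma step (m n : ℕ) :
    ∫ x : ℝ, aeval x (hermite (m+1)) * aeval x (hermite (n+1)) * g x =
      (m + 1 : ℝ) * ∫ x : ℝ, aeval x (hermite m) * aeval x (hermite n) * g x := by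
  have hu : ∀ x : ℝ, HasDerivAt (fun y : ℝ => aeval y (hermite (m+1)))
      ((fun x : ℝ => (m + 1 : ℝ) * aeval x (hermite m)) x) x := by
    intro x
    have h := (hermite (m+1)).hasDerivAt_aeval x
    rw [hermite_derivative] at h
    simpa using h
  have hv := hasDerivAt_hermite_gaussian n
  have I1 : Integrable ((fun x : ℝ => aeval x (hermite (m+1))) *
      (fun x : ℝ => -(aeval x (hermite (n + 1)) * g x))) := by
    refine ((integrable_J (m+1) (n+1)).neg).congr
      (Filter.Eventually.of_forall fun x => ?_)
    simp [Pi.mul_apply]; ring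
  have I2 : Integrable ((fun x : ℝ => (m + 1 : ℝ) * aeval x (hermite m)) *
      (fun x : ℝ => aeval x (hermite n) * g x)) := by
    refine ((integrable_J m n).const_mul (m + 1 : ℝ)).congr
      (Filter.Eventually.of_forall fun x => ?_)
    simp [Pi.mul_apply]; ring
  have I3 : Integrable ((fun x : ℝ => aeval x (hermite (m+1))) *
      (fun x : ℝ => aeval x (hermite n) * g x)) := by
    refine (integrable_J (m+1) n).congr (Filter.Eventually.of_forall fun x => ?_)
    simp [Pi.mul_apply]; ring
  have key := integral_mul_deriv_eq_deriv_mul_of_integrable (fun x _ => hu x) (fun x _ => hv x) I1 I2 I3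
  have L : ∫ x : ℝ, aeval x (hermite (m+1)) * -(aeval x (hermite (n + 1)) * g x)
      = -∫ x : ℝ, aeval x (hermite (m+1)) * aeval x (hermite (n+1)) * g x := by
    rw [← integral_neg]
    congr 1; funext x; ring
  have R : ∫ x : ℝ, ((m + 1 : ℝ) * aeval x (hermite m)) * (aeval x (hermite n) * g x)
      = (m + 1 : ℝ) * ∫ x : ℝ, aeval x (hermite m) * aeval x (hermite n) * g x := by
    rw [← integral_const_mul]
    congr 1; funext x; ring
  rw [L, R] at key
  linarith [key]

lemma gauss_int : ∫ x : ℝ, g x = Real.sqrt (2 * Real.pi) := by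
  have h := integral_gaussian (1/2 : ℝ)
  have he : (fun x : ℝ => Real.exp (-(1/2 : ℝ) * x ^ 2)) = g := by
    funext x; unfold g; congr 1; ring
  rw [he] at h
  rw [h]
  congr 1
  norm_num
  ring

lemma J_eq (m : ℕ) : ∀ n : ℕ,
    ∫ x : ℝ, aeval x (hermite m) * aeval x (hermite n) * g x =
      (if m = n then (Nat.factorial m : ℝ) else 0) * Real.sqrt (2 * Real.pi) := by
  induction m with
  | zero =>
    intro n
    cases n with
    | zero => simpa [hermite_zero] using gauss_int
    | succ n => simpa [hermite_zero] using base n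
  | succ m ih =>
    intro n
    cases n with
    | zero =>
      rw [if_neg (by omega)]
      simpa [hermite_zero] using base m
    | succ n =>
      rw [step m n, ih n]
      by_cases h : m = n
      · subst h
        rw [if_pos rfl, if_pos rfl]
        rw [Nat.factorial_succ]
        push_cast
        ring
      · rw [if_neg h, if_neg (by omega)]
        ring

end HermiteOrthAux

open HermiteOrthAux in
/-- Orthogonality of the probabilists' Hermite polynomials in `L²` of the standard
Gaussian measure: `∫ Hₘ·Hₙ dγ = m!` if `m = n` and `0` otherwise. -/
theorem hermite_orthogonal_gaussian (m n : ℕ) :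
    ∫ x : ℝ, (aeval x (hermite m)) * (aeval x (hermite n)) ∂(gaussianReal 0 1) =
      if m = n then (Nat.factorial m : ℝ) else 0 := by
  rw [gaussianReal_of_var_ne_zero 0 one_ne_zero]
  have hpdf : gaussianPDF 0 1 = fun x => ((Real.toNNReal (gaussianPDFReal 0 1 x) : NNReal) : ENNReal) := by
    funext x; rfl
  rw [hpdf, integral_withDensity_eq_integral_smul
    ((measurable_gaussianPDFReal 0 1).real_toNNReal) _]
  have heq : (fun x : ℝ => Real.toNNReal (gaussianPDFReal 0 1 x) •
      (aeval x (hermite m) * aeval x (hermite n)))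
      = fun x : ℝ => (Real.sqrt (2 * Real.pi))⁻¹ *
          (aeval x (hermite m) * aeval x (hermite n) * g x) := by
    funext x
    rw [NNReal.smul_def, Real.coe_toNNReal _ (gaussianPDFReal_nonneg 0 1 x)]
    unfold gaussianPDFReal g
    push_cast
    rw [smul_eq_mul]
    ring_nf
  rw [heq, integral_const_mul, J_eq m n]
  have hs : Real.sqrt (2 * Real.pi) ≠ 0 := by positivity
  field_simp
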